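/- Let A be a finite-dimensional Q-algebra with Jacobson radical J. If the multiplicative group 1 + J contains no subgroup isomorphic to Z × Z, then J² = 0 and the Q-dimension of J is at most 1. -/

import Mathlib

section AuxUnits

variable {A : Type*} [Ring A]

/-- Units congruent to 1 modulo a left ideal form a subgroup. -/
def unitsSub (J : Ideal A) : Subgroup Aˣ where
  carrier := {w : Aˣ | ((w : A) - 1) ∈ J}
  one_mem' := by simpa using J.zero_mem
  mul_mem' := by
    intro a b ha hb
    have e : ((a * b : Aˣ) : A) - 1 = (a : A) * ((b : A) - 1) + ((a : A) - 1) := by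
      rw [Units.val_mul]; noncomm_ring
    show ((a * b : Aˣ) : A) - 1 ∈ J
    rw [e]
    exact add_mem (J.mul_mem_left _ hb) ha
  inv_mem' := by
    intro a ha
    have e : ((a⁻¹ : Aˣ) : A) - 1 = -((a⁻¹ : Aˣ) * ((a : A) - 1)) := by
      rw [mul_sub, mul_one, Units.inv_mul]; noncomm_ring
    show ((a⁻¹ : Aˣ) : A) - 1 ∈ J
    rw [e]
    exact neg_mem (J.mul_mem_left _ ha)

theorem mem_unitsSub {J : Ideal A} {w : Aˣ} : w ∈ unitsSub J ↔ ((w : A) - 1) ∈ J := Iff.rfl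

theorem coe_zpow_of_sq_zero {t : A} (ht : t * t = 0) (w : Aˣ) (hw : (w : A) = 1 + t) :
    ∀ a : ℤ, ((w ^ a : Aˣ) : A) = 1 + a • t := by
  have h1 : (w : A) * (1 - t) = 1 := by
    rw [hw]
    have : (1 + t) * (1 - t) = 1 - t * t := by noncomm_ring
    rw [this, ht, sub_zero]
  have hinv : ((w⁻¹ : Aˣ) : A) = 1 - t := by
    calc ((w⁻¹ : Aˣ) : A) = (w⁻¹ : Aˣ) * ((w : A) * (1 - t)) := by rw [h1, mul_one]
    _ = (((w⁻¹ : Aˣ) : A) * (w : A)) * (1 - t) := by rw [mul_assoc]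
    _ = 1 - t := by rw [Units.inv_mul, one_mul]
  intro a
  induction a using Int.induction_on with
  | zero => simp
  | succ k ih =>
    rw [zpow_add_one, Units.val_mul, ih, hw]
    have e : (1 + (k : ℤ) • t) * (1 + t) = 1 + ((k : ℤ) + 1) • t + (k : ℤ) • (t * t) := by
      rw [mul_add, add_mul, add_mul, mul_one, one_mul, mul_one, smul_mul_assoc, add_smul, one_smul]
      abel
    rw [e, ht, smul_zero, add_zero]
  | pred k ih =>
    rw [zpow_sub_one, Units.val_mul, ih, hinv]
    have e : (1 + (-(k : ℤ)) • t) * (1 - t) = 1 + (-(k : ℤ) - 1) • t - (-(k : ℤ)) • (t * t) := by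
      rw [mul_sub, add_mul, add_mul, mul_one, one_mul, mul_one, smul_mul_assoc, sub_smul, one_smul]
      abel
    rw [e, ht, smul_zero, sub_zero]

theorem coe_zpow_sub_mem (J : Ideal A) (w : Aˣ) (hw : ((w : A) - 1) ∈ J) :
    ∀ a : ℤ, ((w ^ a : Aˣ) : A) - 1 - a • ((w : A) - 1) ∈ J * J := by
  set t : A := (w : A) - 1 with htdef
  have hwt : (w : A) = 1 + t := by rw [htdef]; abel
  have hs : ((w⁻¹ : Aˣ) : A) - 1 ∈ J := (unitsSub J).inv_mem hw
  set s : A := ((w⁻¹ : Aˣ) : A) - 1 with hsdef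
  have hws : ((w⁻¹ : Aˣ) : A) = 1 + s := by rw [hsdef]; abel
  have hst : s + t = -(s * t) := by
    have e1 : (1 + s) * (1 + t) = 1 := by
      rw [← hws, ← hwt, Units.inv_mul]
    have e2 : (1 + s) * (1 + t) = 1 + (s + t + s * t) := by noncomm_ring
    rw [e2] at e1
    have h0 : s + t + s * t = 0 := by
      have := congrArg (fun q => q - 1) e1
      simpa using this
    exact eq_neg_of_add_eq_zero_left h0
  intro a
  induction a using Int.induction_on with
  | zero => simpa using (J * J).zero_mem
  | succ k ih =>
    set r : A := ((w ^ (k : ℤ) : Aˣ) : A) - 1 - (k : ℤ) • t with hrdef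
    have hwk : ((w ^ (k : ℤ) : Aˣ) : A) = 1 + (k : ℤ) • t + r := by rw [hrdef]; abel
    rw [zpow_add_one, Units.val_mul, hwk, hwt]
    have e : (1 + (k : ℤ) • t + r) * (1 + t) - 1 - ((k : ℤ) + 1) • t
        = (k : ℤ) • (t * t) + (r + r * t) := by
      rw [mul_add, mul_one, add_mul, add_mul, one_mul, smul_mul_assoc, add_smul, one_smul]
      abel
    rw [e]
    have hrt : r * t ∈ J * J := by
      have h1 : r * t ∈ (J * J) * J := Submodule.mul_mem_mul ih hw
      rw [mul_assoc] at h1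
      exact Ideal.mul_le_right h1
    exact add_mem (zsmul_mem (Submodule.mul_mem_mul hw hw) _) (add_mem ih hrt)
  | pred k ih =>
    set r : A := ((w ^ (-(k : ℤ)) : Aˣ) : A) - 1 - (-(k : ℤ)) • t with hrdef
    have hwk : ((w ^ (-(k : ℤ)) : Aˣ) : A) = 1 + (-(k : ℤ)) • t + r := by rw [hrdef]; abel
    rw [zpow_sub_one, Units.val_mul, hwk, hws]
    have e : (1 + (-(k : ℤ)) • t + r) * (1 + s) - 1 - (-(k : ℤ) - 1) • t
        = (s + t) + ((-(k : ℤ)) • (t * s) + (r + r * s)) := by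
      rw [mul_add, mul_one, add_mul, add_mul, one_mul, smul_mul_assoc, sub_smul, one_smul]
      abel
    rw [e, hst]
    have hrs : r * s ∈ J * J := by
      have h1 : r * s ∈ (J * J) * J := Submodule.mul_mem_mul ih hs
      rw [mul_assoc] at h1
      exact Ideal.mul_le_right h1
    exact add_mem (neg_mem (Submodule.mul_mem_mul hs hw))
      (add_mem (zsmul_mem (Submodule.mul_mem_mul hw hs) _) (add_mem ih hrs))



theorem exists_unit_one_add {z : A} (hz : z ∈ Ideal.jacobson (⊥ : Ideal A)) :
    ∃ w : Aˣ, (w : A) = 1 + z := by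
  have key : ∀ y ∈ Ideal.jacobson (⊥ : Ideal A),
      ∃ s : A, s * (1 + y) = 1 ∧ s - 1 ∈ Ideal.jacobson (⊥ : Ideal A) := by
    intro y hy
    obtain ⟨s, hs⟩ := Ideal.exists_mul_sub_mem_of_sub_one_mem_jacobson (1 + y) (by simpa using hy)
    rw [Ideal.mem_bot, sub_eq_zero] at hs
    refine ⟨s, hs, ?_⟩
    have h' : s + s * y = 1 := by rw [← hs]; noncomm_ring
    have e : s - 1 = -(s * y) := by rw [← h']; abel
    rw [e]
    exact neg_mem (Ideal.mul_mem_left _ _ hy)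
  obtain ⟨s, hs1, hs2⟩ := key z hz
  obtain ⟨t, ht1, -⟩ := key (s - 1) hs2
  have hts : t * s = 1 := by rw [← ht1]; congr 1; abel
  have htr : t = 1 + z := by
    calc t = t * (s * (1 + z)) := by rw [hs1, mul_one]
    _ = (t * s) * (1 + z) := by rw [mul_assoc]
    _ = 1 + z := by rw [hts, one_mul]
  exact ⟨⟨1 + z, s, by rw [← htr]; exact hts, hs1⟩, rfl⟩

/-- `JP J k = J ^ (k+1)` defined without a `Monoid` structure. -/
def JP (J : Ideal A) : ℕ → Ideal A
  | 0 => J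
  | k + 1 => JP J k * J

theorem JP_succ (J : Ideal A) (k : ℕ) : JP J (k + 1) = JP J k * J := rfl

theorem JP_succ' (J : Ideal A) (k : ℕ) : JP J (k + 1) = J * JP J k := by
  induction k with
  | zero => rfl
  | succ k ih => rw [JP_succ, ih, mul_assoc, ← JP_succ, ih]

theorem JP_le (J : Ideal A) (k : ℕ) : JP J k ≤ J := by
  induction k with
  | zero => exact le_rfl
  | succ k ih => exact le_trans (le_of_eq (JP_succ' J k)) (le_trans Ideal.mul_le_right ih)

theorem JP_le_JP (J : Ideal A) {k m : ℕ} (h : k ≤ m) : JP J m ≤ JP J k := by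
  induction m with
  | zero => simpa [Nat.le_zero.mp h] using le_rfl
  | succ m ih =>
    rcases Nat.lt_or_ge k (m+1) with h' | h'
    · exact le_trans (le_of_eq (JP_succ' J m)) (le_trans Ideal.mul_le_right (ih (by omega)))
    · have : k = m + 1 := le_antisymm h h'
      rw [this]

theorem JP_add (J : Ideal A) (a b : ℕ) : JP J (a + b + 1) = JP J a * JP J b := by
  induction b with
  | zero => rfl
  | succ b ih => rw [show a + (b+1) + 1 = (a + b + 1) + 1 from rfl, JP_succ, ih, JP_succ, mul_assoc]

theorem two_sided {A : Type*} [Ring A] (J : Ideal A) (hJ : J = Ideal.jacobson (⊥ : Ideal A))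
    {a b : A} (ha : a ∈ J) : a * b ∈ J := by
  rw [hJ] at ha ⊢
  exact Ideal.mul_mem_right _ _ ha

theorem JP_two_sided {A : Type*} [Ring A] (J : Ideal A) (hJ : J = Ideal.jacobson (⊥ : Ideal A))
    (k : ℕ) {a b : A} (ha : a ∈ JP J k) : a * b ∈ JP J k := by
  induction k generalizing a with
  | zero => exact two_sided J hJ ha
  | succ k ih =>
    rw [JP_succ'] at ha ⊢
    refine Submodule.mul_induction_on (C := fun r => r * b ∈ J * JP J k) ha
      (fun m hm n hn => ?_) (fun x y hx hy => ?_)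
    · show (m * n) * b ∈ J * JP J k
      rw [mul_assoc]; exact Submodule.mul_mem_mul hm (ih hn)
    · show (x + y) * b ∈ J * JP J k
      rw [add_mul]; exact add_mem hx hy

theorem JP_eq_bot {A : Type*} [Ring A] [Algebra ℚ A] [FiniteDimensional ℚ A]
    (J : Ideal A) (hJ : J = Ideal.jacobson (⊥ : Ideal A)) : ∃ N, JP J N = ⊥ := by
  haveI hart : IsArtinianRing A := isArtinian_of_tower ℚ inferInstance
  let f : ℕ →o (Submodule A A)ᵒᵈ := ⟨fun k => JP J k, fun k m h => JP_le_JP J h⟩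
  obtain ⟨n, hn⟩ := IsArtinian.monotone_stabilizes f
  have h2 : JP J n = JP J (n + n + 1) := hn (n + n + 1) (by omega)
  set I := JP J n with hI
  have hII : I * I = I := by rw [hI, ← JP_add J n n, ← h2]
  refine ⟨n, ?_⟩
  by_contra hne
  have hprop : I * I ≠ ⊥ := by rw [hII]; exact hne
  obtain ⟨K, hK, hKmin⟩ := (wellFounded_lt (α := Ideal A)).has_min
    {K : Ideal A | I * K ≠ ⊥} ⟨I, hprop⟩
  have hnle : ¬ I * K ≤ ⊥ := fun hle => hK (le_bot_iff.mp hle)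
  have hex2 : ∃ m ∈ I, ∃ a ∈ K, m * a ≠ 0 := by
    by_contra hcon
    push_neg at hcon
    exact hnle (Submodule.mul_le.mpr fun m hm a ha => (Submodule.mem_bot A).mpr (hcon m hm a ha))
  obtain ⟨m, hm, a, haK, hma⟩ := hex2
  have hSa : I * Ideal.span {a} ≠ ⊥ := by
    intro hbot
    have hmem : m * a ∈ I * Ideal.span {a} := Submodule.mul_mem_mul hm (Ideal.subset_span rfl)
    rw [hbot, Submodule.mem_bot] at hmem
    exact hma hmem
  have hsub : I * Ideal.span {a} ≤ K :=
    Submodule.mul_le.mpr fun p _ q hq =>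
      K.mul_mem_left p (Ideal.span_le.mpr (Set.singleton_subset_iff.mpr haK) hq)
  have hmem2 : I * (I * Ideal.span {a}) ≠ ⊥ := by rw [← mul_assoc, hII]; exact hSa
  have heq : I * Ideal.span {a} = K := by
    rcases lt_or_eq_of_le hsub with hlt | he
    · exact absurd hlt (hKmin _ hmem2)
    · exact he
  have haI : a ∈ I * Ideal.span {a} := heq ▸ haK
  have hzex : ∀ r ∈ I * Ideal.span {a}, ∃ z ∈ I, z * a = r := by
    intro r hr
    refine Submodule.mul_induction_on hr (fun p hp q hq => ?_) (fun x y hx hy => ?_)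
    · obtain ⟨c, rfl⟩ := Submodule.mem_span_singleton.mp hq
      exact ⟨p * c, JP_two_sided J hJ n hp, by rw [smul_eq_mul, mul_assoc]⟩
    · obtain ⟨z1, hz1, e1⟩ := hx
      obtain ⟨z2, hz2, e2⟩ := hy
      exact ⟨z1 + z2, add_mem hz1 hz2, by rw [add_mul, e1, e2]⟩
  obtain ⟨z, hzI, hza⟩ := hzex a haI
  obtain ⟨w, hw⟩ := exists_unit_one_add (z := -z) (by rw [← hJ]; exact neg_mem (JP_le J n hzI))
  have hwa : (w : A) * a = 0 := by
    rw [hw, add_mul, one_mul, neg_mul, hza]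
    exact add_neg_cancel a
  have ha0 : a = 0 := by
    calc a = ((w⁻¹ : Aˣ) : A) * ((w : A) * a) := by rw [← mul_assoc, Units.inv_mul, one_mul]
    _ = 0 := by rw [hwa, mul_zero]
  exact hma (by rw [ha0, mul_zero])

theorem exists_free_subgroup {A : Type*} [Ring A] (J : Ideal A)
    {x y : A} (hx : x ∈ J) (hy : y ∈ J) (u v : Aˣ)
    (hu : (u : A) = 1 + x) (hv : (v : A) = 1 + y)
    (hcomm : Commute u v)
    (hinj : ∀ a b : ℤ, u ^ a * v ^ b = 1 → a = 0 ∧ b = 0) :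
    ∃ H : Subgroup Aˣ, (∀ w ∈ H, ((w : A) - 1) ∈ J) ∧ Nonempty (H ≃* Multiplicative (ℤ × ℤ)) := by
  let φ : Multiplicative (ℤ × ℤ) →* Aˣ :=
  { toFun := fun p => u ^ (Multiplicative.toAdd p).1 * v ^ (Multiplicative.toAdd p).2
    map_one' := by simp
    map_mul' := by
      intro p q
      simp only [toAdd_mul, Prod.fst_add, Prod.snd_add]
      rw [zpow_add, zpow_add]
      exact ((hcomm.symm.zpow_zpow _ _).mul_mul_mul_comm _ _).symm }
  have hφinj : Function.Injective φ := by
    rw [injective_iff_map_eq_one]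
    intro p hp
    obtain ⟨h1, h2⟩ := hinj _ _ hp
    have : Multiplicative.toAdd p = 0 := Prod.ext h1 h2
    simpa using this
  refine ⟨φ.range, ?_, ⟨(MonoidHom.ofInjective hφinj).symm⟩⟩
  rintro w ⟨p, rfl⟩
  have hu' : u ∈ unitsSub J := by rw [mem_unitsSub, hu]; simpa using hx
  have hv' : v ∈ unitsSub J := by rw [mem_unitsSub, hv]; simpa using hy
  exact (unitsSub J).mul_mem (Subgroup.zpow_mem _ hu' _) (Subgroup.zpow_mem _ hv' _)

end AuxUnits

theorem stmt0 {A : Type*} [Ring A] [Algebra ℚ A] [FiniteDimensional ℚ A]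
    (J : Ideal A) (hJ : J = Ideal.jacobson (⊥ : Ideal A))
    (h : ¬ ∃ H : Subgroup Aˣ, (∀ u ∈ H, ((u : A) - 1) ∈ J) ∧
        Nonempty (H ≃* Multiplicative (ℤ × ℤ))) :
    J * J = ⊥ ∧ Module.finrank ℚ (Submodule.restrictScalars ℚ (J : Submodule A A)) ≤ 1 := by
  classical
  by_contra hc
  apply h
  by_cases hJJ : J * J = ⊥
  · -- Case B : J² = 0 but dim J ≥ 2
    have hrank : 2 ≤ Module.finrank ℚ (Submodule.restrictScalars ℚ (J : Submodule A A)) := by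
      by_contra hr
      exact hc ⟨hJJ, by omega⟩
    obtain ⟨f, hf⟩ := exists_linearIndependent_of_le_finrank hrank
    set x : A := (f 0 : A) with hxdef
    set y : A := (f 1 : A) with hydef
    have hx : x ∈ J := (f 0).2
    have hy : y ∈ J := (f 1).2
    have hindep : LinearIndependent ℚ (fun i => ((f i : A))) :=
      hf.map' (Submodule.restrictScalars ℚ (J : Submodule A A)).subtype
        (Submodule.ker_subtype _)
    have hxx : x * x = 0 := by
      have h1 := Submodule.mul_mem_mul hx hx; rw [hJJ, Submodule.mem_bot] at h1; exact h1
    have hyy : y * y = 0 := by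
      have h1 := Submodule.mul_mem_mul hy hy; rw [hJJ, Submodule.mem_bot] at h1; exact h1
    have hxy : x * y = 0 := by
      have h1 := Submodule.mul_mem_mul hx hy; rw [hJJ, Submodule.mem_bot] at h1; exact h1
    have hyx : y * x = 0 := by
      have h1 := Submodule.mul_mem_mul hy hx; rw [hJJ, Submodule.mem_bot] at h1; exact h1
    obtain ⟨u, hu⟩ := exists_unit_one_add (z := x) (by rw [← hJ]; exact hx)
    obtain ⟨v, hv⟩ := exists_unit_one_add (z := y) (by rw [← hJ]; exact hy)
    have hcomm : Commute u v := by
      apply Units.ext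
      show ((u * v : Aˣ) : A) = ((v * u : Aˣ) : A)
      rw [Units.val_mul, Units.val_mul, hu, hv]
      have e1 : (1 + x) * (1 + y) = 1 + x + y + x * y := by noncomm_ring
      have e2 : (1 + y) * (1 + x) = 1 + x + y + y * x := by noncomm_ring
      rw [e1, e2, hxy, hyx]
    refine exists_free_subgroup J hx hy u v hu hv hcomm ?_
    intro a b hab
    have hval : ((u ^ a * v ^ b : Aˣ) : A) = 1 := by rw [hab, Units.val_one]
    rw [Units.val_mul, coe_zpow_of_sq_zero hxx u hu a, coe_zpow_of_sq_zero hyy v hv b] at hval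
    have haz : (a • x) * (b • y) = 0 := by
      rw [smul_mul_assoc, mul_smul_comm, hxy, smul_zero, smul_zero]
    have hexp : (1 + a • x) * (1 + b • y) = 1 + (a • x + b • y) + (a • x) * (b • y) := by
      rw [mul_add, mul_one, add_mul, one_mul]; abel
    rw [hexp, haz, add_zero] at hval
    have hsum : a • x + b • y = 0 := by
      have e : a • x + b • y = (1 + (a • x + b • y)) - 1 := by abel
      rw [e, hval, sub_self]
    have hq : (a : ℚ) • x + (b : ℚ) • y = 0 := by
      rw [Int.cast_smul_eq_zsmul, Int.cast_smul_eq_zsmul]; exact hsum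
    have hz := Fintype.linearIndependent_iff.mp hindep ![(a : ℚ), (b : ℚ)] (by
      rw [Fin.sum_univ_two]
      simpa using hq)
    constructor
    · have := hz 0; simp at this; exact_mod_cast this
    · have := hz 1; simp at this; exact_mod_cast this
  · -- Case A : J² ≠ 0
    have hex : ∃ m, JP J m = ⊥ := JP_eq_bot J hJ
    have hnn : JP J (Nat.find hex) = ⊥ := Nat.find_spec hex
    set nn := Nat.find hex with hnndef
    have hJbotne : J ≠ ⊥ := by
      intro hb
      exact hJJ (by rw [hb]; exact Submodule.bot_mul _)
    have h2 : 2 ≤ nn := by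
      by_contra hlt
      push_neg at hlt
      have hlt' : nn = 0 ∨ nn = 1 := by omega
      rcases hlt' with h0 | h1
      · rw [h0] at hnn; exact hJbotne hnn
      · rw [h1] at hnn; exact hJJ hnn
    have hzne : JP J (nn - 1) ≠ ⊥ := Nat.find_min hex (by omega)
    obtain ⟨z, hzmem, hz0⟩ := (Submodule.ne_bot_iff _).mp hzne
    have hzJJ : z ∈ J * J := (JP_le_JP J (show 1 ≤ nn - 1 by omega)) hzmem
    have hzJ : z ∈ J := JP_le J _ hzmem
    have hxex : ∃ x ∈ J, x ∉ J * J := by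
      rw [← SetLike.not_le_iff_exists]
      intro hle
      have heqJ : J * J = J := le_antisymm Ideal.mul_le_right hle
      have hall : ∀ k, JP J k = J := by
        intro k; induction k with
        | zero => rfl
        | succ k ih => rw [JP_succ, ih]; exact heqJ
      exact hJbotne (by rw [← hall nn]; exact hnn)
    obtain ⟨x, hxJ, hxJJ⟩ := hxex
    have hn1 : nn - 1 + 1 = nn := by omega
    have hxz : x * z = 0 := by
      have h1 : x * z ∈ J * JP J (nn - 1) := Submodule.mul_mem_mul hxJ hzmem
      rw [← JP_succ', hn1, hnn, Submodule.mem_bot] at h1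
      exact h1
    have hzx : z * x = 0 := by
      have h1 : z * x ∈ JP J (nn - 1) * J := Submodule.mul_mem_mul hzmem hxJ
      rw [← JP_succ, hn1, hnn, Submodule.mem_bot] at h1
      exact h1
    have hzz : z * z = 0 := by
      have h1 : z * z ∈ JP J (nn - 1) * J := Submodule.mul_mem_mul hzmem hzJ
      rw [← JP_succ, hn1, hnn, Submodule.mem_bot] at h1
      exact h1
    obtain ⟨u, hu⟩ := exists_unit_one_add (z := x) (by rw [← hJ]; exact hxJ)
    obtain ⟨v, hv⟩ := exists_unit_one_add (z := z) (by rw [← hJ]; exact hzJ)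
    have hcomm : Commute u v := by
      apply Units.ext
      show ((u * v : Aˣ) : A) = ((v * u : Aˣ) : A)
      rw [Units.val_mul, Units.val_mul, hu, hv]
      have e1 : (1 + x) * (1 + z) = 1 + x + z + x * z := by noncomm_ring
      have e2 : (1 + z) * (1 + x) = 1 + x + z + z * x := by noncomm_ring
      rw [e1, e2, hxz, hzx]
    refine exists_free_subgroup J hxJ hzJ u v hu hv hcomm ?_
    intro a b hab
    have hval : ((u ^ a * v ^ b : Aˣ) : A) = 1 := by rw [hab, Units.val_one]
    have hux : ((u : A)) - 1 = x := by rw [hu]; abel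
    have hmem := coe_zpow_sub_mem J u (by rw [hux]; exact hxJ) a
    rw [hux] at hmem
    set r : A := ((u ^ a : Aˣ) : A) - 1 - a • x with hrdef
    have hua : ((u ^ a : Aˣ) : A) = 1 + a • x + r := by rw [hrdef]; abel
    rw [Units.val_mul, hua, coe_zpow_of_sq_zero hzz v hv b] at hval
    have haz : (a • x) * (b • z) = 0 := by
      rw [smul_mul_assoc, mul_smul_comm, hxz, smul_zero, smul_zero]
    have hrz : r * (b • z) = 0 := by
      have h1 : r * z ∈ (J * J) * JP J (nn - 1) := Submodule.mul_mem_mul hmem hzmem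
      have h2' : (J * J) * JP J (nn - 1) = JP J (1 + (nn - 1) + 1) := (JP_add J 1 (nn - 1)).symm
      have h3 : JP J (1 + (nn - 1) + 1) ≤ JP J nn := JP_le_JP J (by omega)
      rw [h2'] at h1
      have h4 := h3 h1
      rw [hnn, Submodule.mem_bot] at h4
      rw [mul_smul_comm, h4, smul_zero]
    have hexp : (1 + a • x + r) * (1 + b • z)
        = 1 + (a • x + b • z + r) + ((a • x) * (b • z) + r * (b • z)) := by
      rw [mul_add, mul_one, add_mul, add_mul, one_mul]; abel
    rw [hexp, haz, hrz, add_zero, add_zero] at hval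
    have hsum : a • x + b • z + r = 0 := by
      have e : a • x + b • z + r = (1 + (a • x + b • z + r)) - 1 := by abel
      rw [e, hval, sub_self]
    have haJJ : a • x ∈ J * J := by
      have e : a • x = (a • x + b • z + r) - b • z - r := by abel
      rw [e, hsum]
      exact sub_mem (sub_mem (zero_mem _) (zsmul_mem hzJJ b)) hmem
    have ha : a = 0 := by
      by_contra ha0
      apply hxJJ
      have hq : ((a : ℚ)) • x ∈ J * J := by rw [Int.cast_smul_eq_zsmul]; exact haJJ
      have e : x = ((a : ℚ))⁻¹ • (((a : ℚ)) • x) := by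
        rw [smul_smul, inv_mul_cancel₀ (by exact_mod_cast ha0), one_smul]
      rw [e, Algebra.smul_def]
      exact Ideal.mul_mem_left _ _ hq
    refine ⟨ha, ?_⟩
    rw [ha] at hab
    simp only [zpow_zero, one_mul] at hab
    have hvb : ((v ^ b : Aˣ) : A) = 1 := by rw [hab, Units.val_one]
    rw [coe_zpow_of_sq_zero hzz v hv b] at hvb
    have hbz : b • z = 0 := by
      have e : b • z = (1 + b • z) - 1 := by abel
      rw [e, hvb, sub_self]
    have hq : ((b : ℚ)) • z = 0 := by rw [Int.cast_smul_eq_zsmul]; exact hbz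
    rcases smul_eq_zero.mp hq with h' | h'
    · exact_mod_cast h'
    · exact absurd h' hz0
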